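/- Let G = (S, L, H) be an n-channel open quantum system and define G⁻¹ = (S†, −S†L, −H), where (S†L)_j = Σ_k (S_{kj})* L_k. Then G⁻¹ is again an n-channel open quantum system (S† is unitary) and G⁻¹ ◁ G = G ◁ G⁻¹ = (I, 0, 0), componentwise as triples. -/
import Mathlib


noncomputable section

open Finset

variable {E : Type*} [NormedAddCommGroup E] [InnerProductSpace ℂ E] [CompleteSpace E]

/-- `Im{A} = (A - A*)/(2i)`. -/
def imOp (A : E →L[ℂ] E) : E →L[ℂ] E := (2 * Complex.I)⁻¹ • (A - star A)

/-- An open quantum system `(S, L, H)` with field channels indexed by `ι`: an `ι×ι` matrix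
`S` of bounded operators, an `ι`-vector `L` of bounded operators, and an operator `H`. -/
structure QOpen (ι : Type*) (E : Type*) [NormedAddCommGroup E] [InnerProductSpace ℂ E]
    [CompleteSpace E] where
  S : Matrix ι ι (E →L[ℂ] E)
  L : ι → E →L[ℂ] E
  H : E →L[ℂ] E

/-- The scattering matrix of `G` is unitary: `S†S = SS† = I`. -/
def QOpen.unitaryS {ι : Type*} [Fintype ι] [DecidableEq ι] (G : QOpen ι E) : Prop :=
  G.S.conjTranspose * G.S = 1 ∧ G.S * G.S.conjTranspose = 1

/-- The series product `G₂ ◁ G₁ = (S₂S₁, L₂ + S₂L₁, H₁ + H₂ + Im{L₂†S₂L₁})`. -/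
def series {ι : Type*} [Fintype ι] (G₂ G₁ : QOpen ι E) : QOpen ι E where
  S := G₂.S * G₁.S
  L := fun j => G₂.L j + ∑ k, G₂.S j k * G₁.L k
  H := G₁.H + G₂.H + imOp (∑ j, ∑ k, star (G₂.L j) * G₂.S j k * G₁.L k)

/-- The inverse system `G⁻¹ = (S†, −S†L, −H)`. -/
def QOpen.inv {ι : Type*} [Fintype ι] (G : QOpen ι E) : QOpen ι E where
  S := G.S.conjTranspose
  L := fun j => -(∑ k, star (G.S k j) * G.L k)
  H := -G.H

lemma imOp_of_sa (A : E →L[ℂ] E) (h : star A = A) : imOp A = 0 := by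
  simp [imOp, h]

/-- for an open quantum system `G = (S, L, H)`, the triple
`G⁻¹ = (S†, −S†L, −H)` is again an open quantum system (`S†` is unitary and `−H` is
self-adjoint), and `G⁻¹ ◁ G = G ◁ G⁻¹ = (I, 0, 0)` componentwise as triples. -/
theorem stmt_3 {ι : Type*} [Fintype ι] [DecidableEq ι]
    (G : QOpen ι E) (hS : G.unitaryS) (hH : IsSelfAdjoint G.H) :
    (G.inv.unitaryS ∧ IsSelfAdjoint G.inv.H)
      ∧ series G.inv G = QOpen.mk (1 : Matrix ι ι (E →L[ℂ] E)) 0 0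
      ∧ series G G.inv = QOpen.mk (1 : Matrix ι ι (E →L[ℂ] E)) 0 0 := by
  obtain ⟨h1, h2⟩ := hS
  have key1 : ∀ m k : ι, (∑ j, G.S m j * star (G.S k j)) = if m = k then 1 else 0 := by
    intro m k
    have := congrFun (congrFun h2 m) k
    simpa [Matrix.mul_apply, Matrix.conjTranspose_apply, Matrix.one_apply] using this
  have key2 : ∀ m k : ι, (∑ j, star (G.S j m) * G.S j k) = if m = k then 1 else 0 := by
    intro m k
    have := congrFun (congrFun h1 m) k
    simpa [Matrix.mul_apply, Matrix.conjTranspose_apply, Matrix.one_apply] using this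
  refine ⟨⟨⟨?_, ?_⟩, ?_⟩, ?_, ?_⟩
  · simpa [QOpen.inv] using h2
  · simpa [QOpen.inv] using h1
  · simpa [QOpen.inv] using hH.neg
  · -- series G.inv G = (1, 0, 0)
    have hL : (fun j => G.inv.L j + ∑ k, G.inv.S j k * G.L k) = (0 : ι → E →L[ℂ] E) := by
      funext j
      simp [QOpen.inv, Matrix.conjTranspose_apply]
    have hX : (∑ j, ∑ k, star (G.inv.L j) * G.inv.S j k * G.L k)
        = -∑ k, star (G.L k) * G.L k := by
      have : ∀ j k : ι, star (G.inv.L j) * G.inv.S j k * G.L k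
          = -∑ m, star (G.L m) * G.S m j * (star (G.S k j) * G.L k) := by
        intro j k
        simp [QOpen.inv, Matrix.conjTranspose_apply, star_sum, Finset.sum_mul, mul_assoc]
      simp only [this, Finset.sum_neg_distrib]
      rw [Finset.sum_comm]
      congr 1
      refine Finset.sum_congr rfl fun k _ => ?_
      rw [Finset.sum_comm]
      have : ∀ m : ι, (∑ j, star (G.L m) * G.S m j * (star (G.S k j) * G.L k))
          = star (G.L m) * ((∑ j, G.S m j * star (G.S k j)) * G.L k) := by
        intro m
        simp [Finset.sum_mul, Finset.mul_sum, mul_assoc]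
      simp only [this, key1]
      simp [Finset.sum_ite_eq, eq_comm]
    have hH0 : G.H + G.inv.H + imOp (∑ j, ∑ k, star (G.inv.L j) * G.inv.S j k * G.L k)
        = 0 := by
      rw [hX, imOp_of_sa]
      · simp [QOpen.inv]
      · simp [star_sum, star_mul]
    show QOpen.mk _ _ _ = _
    rw [QOpen.mk.injEq]
    exact ⟨by simpa [QOpen.inv] using h1, hL, hH0⟩
  · -- series G G.inv = (1, 0, 0)
    have hL : (fun j => G.L j + ∑ k, G.S j k * G.inv.L k) = (0 : ι → E →L[ℂ] E) := by
      funext j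
      have : ∀ k : ι, G.S j k * G.inv.L k = -∑ m, G.S j k * star (G.S m k) * G.L m := by
        intro k
        simp [QOpen.inv, Finset.mul_sum, mul_assoc]
      simp only [this, Finset.sum_neg_distrib]
      rw [Finset.sum_comm]
      have : ∀ m : ι, (∑ k, G.S j k * star (G.S m k) * G.L m)
          = (∑ k, G.S j k * star (G.S m k)) * G.L m := by
        intro m; simp [Finset.sum_mul]
      simp only [this, key1]
      simp [Finset.sum_ite_eq, eq_comm]
    have hX : (∑ j, ∑ k, star (G.L j) * G.S j k * G.inv.L k)
        = -∑ j, star (G.L j) * G.L j := by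
      have : ∀ j k : ι, star (G.L j) * G.S j k * G.inv.L k
          = -∑ m, star (G.L j) * (G.S j k * star (G.S m k)) * G.L m := by
        intro j k
        simp [QOpen.inv, Finset.mul_sum, mul_assoc]
      simp only [this, Finset.sum_neg_distrib]
      congr 1
      refine Finset.sum_congr rfl fun j _ => ?_
      rw [Finset.sum_comm]
      have : ∀ m : ι, (∑ k, star (G.L j) * (G.S j k * star (G.S m k)) * G.L m)
          = star (G.L j) * ((∑ k, G.S j k * star (G.S m k)) * G.L m) := by
        intro m; simp [Finset.sum_mul, Finset.mul_sum, mul_assoc]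
      simp only [this, key1]
      simp [Finset.sum_ite_eq, eq_comm]
    have hH0 : G.inv.H + G.H + imOp (∑ j, ∑ k, star (G.L j) * G.S j k * G.inv.L k)
        = 0 := by
      rw [hX, imOp_of_sa]
      · simp [QOpen.inv]
      · simp [star_sum, star_mul]
    show QOpen.mk _ _ _ = _
    rw [QOpen.mk.injEq]
    exact ⟨by simpa [QOpen.inv] using h2, hL, hH0⟩
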